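/- Let f : X → Y be a morphism of schemes. The following are equivalent: (i) every specialization pair y ≤ y' in Y (meaning y ∈ closure{y'}) lifts to a pair x ≤ x' in X with f(x) = y, f(x') = y'; (ii) for every point y ∈ Y, f(S(f⁻¹(y))) = S(y), where S denotes closure under specialization; (iii) for every subset Z ⊆ Y, f(S(f⁻¹(Z))) = S(Z). -/

import Mathlib

open AlgebraicGeometry Topology Set

universe u

/-- The specialization closure `S(E)` of a subset: all specializations of points of `E`. -/
def specCl {X : Type*} [TopologicalSpace X] (E : Set X) : Set X := {y | ∃ e ∈ E, e ⤳ y}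

/-- For a morphism of schemes `f : X ⟶ Y` the following are equivalent:
(i) every specialization pair in `Y` lifts to one in `X`;
(ii) `f(S(f⁻¹(y))) = S(y)` for every point `y`;
(iii) `f(S(f⁻¹(Z))) = S(Z)` for every subset `Z`. -/
theorem stmt3 {X Y : Scheme.{u}} (f : X ⟶ Y) :
    List.TFAE [
      ∀ y y' : Y, y' ⤳ y → ∃ x x' : X, x' ⤳ x ∧ f.base x = y ∧ f.base x' = y',
      ∀ y : Y, f.base '' specCl (f.base ⁻¹' {y}) = specCl {y},
      ∀ Z : Set Y, f.base '' specCl (f.base ⁻¹' Z) = specCl Z] := by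
  tfae_have 1 → 3 := by
    intro h Z
    ext y
    constructor
    · rintro ⟨x, ⟨x', hx', hspec⟩, rfl⟩
      exact ⟨f.base x', hx', hspec.map f.base.hom.continuous⟩
    · rintro ⟨y', hy', hspec⟩
      obtain ⟨x, x', hs, hfx, hfx'⟩ := h y y' hspec
      exact ⟨x, ⟨x', by simp [hfx', hy'], hs⟩, hfx⟩
  tfae_have 3 → 2 := fun h y => h {y}
  tfae_have 2 → 1 := by
    intro h y y' hspec
    have : y ∈ specCl ({y'} : Set Y) := ⟨y', rfl, hspec⟩
    rw [← h y'] at this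
    obtain ⟨x, ⟨x', hx', hs⟩, hfx⟩ := this
    exact ⟨x, x', hs, hfx, hx'⟩
  tfae_finish
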